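/- Every binary symplectic matrix F ∈ Sp(2n, F₂) can be expressed as a product F = L_{Q₁} · Ω · T_{R₁} · G_k · T_{R₂} · L_{Q₂}, where 0 ≤ k ≤ n is an integer, Q₁, Q₂ ∈ GL(n, F₂) are invertible, R₁, R₂ ∈ F₂^{n×n} are symmetric, L_Q denotes the block matrix [[Q, 0],[0, Q^{−T}]] (with Q^{−T} the transpose of the inverse of Q), T_R denotes the block matrix [[Iₙ, R],[0, Iₙ]], Ω = [[0, Iₙ],[Iₙ, 0]], and G_k = [[L_{n−k}, U_k],[U_k, L_{n−k}]] with U_k = diag(I_k, 0_{n−k}) and L_{n−k} = diag(0_k, I_{n−k}), all matrices over F₂. -/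

import Mathlib

open Matrix

noncomputable section

/-- The symplectic form `Ω = [[0, I],[I, 0]]` over `F₂`. -/
def OmegaMat (n : ℕ) : Matrix (Fin n ⊕ Fin n) (Fin n ⊕ Fin n) (ZMod 2) :=
  Matrix.fromBlocks 0 1 1 0

/-- The elementary symplectic matrix `L_Q = [[Q, 0],[0, Q^{-T}]]`. -/
def LQ {n : ℕ} (Q : Matrix (Fin n) (Fin n) (ZMod 2)) :
    Matrix (Fin n ⊕ Fin n) (Fin n ⊕ Fin n) (ZMod 2) :=
  Matrix.fromBlocks Q 0 0 (Q⁻¹)ᵀ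

/-- The elementary symplectic matrix `T_R = [[I, R],[0, I]]`. -/
def TR {n : ℕ} (R : Matrix (Fin n) (Fin n) (ZMod 2)) :
    Matrix (Fin n ⊕ Fin n) (Fin n ⊕ Fin n) (ZMod 2) :=
  Matrix.fromBlocks 1 R 0 1

/-- `U_k = diag(I_k, 0_{n-k})`. -/
def Uk (n k : ℕ) : Matrix (Fin n) (Fin n) (ZMod 2) :=
  Matrix.diagonal fun i => if (i : ℕ) < k then 1 else 0

/-- `L_{n-k} = diag(0_k, I_{n-k})`. -/
def Lnk (n k : ℕ) : Matrix (Fin n) (Fin n) (ZMod 2) :=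
  Matrix.diagonal fun i => if (i : ℕ) < k then 0 else 1

/-- The elementary symplectic matrix `G_k = [[L_{n-k}, U_k],[U_k, L_{n-k}]]`. -/
def Gk (n k : ℕ) : Matrix (Fin n ⊕ Fin n) (Fin n ⊕ Fin n) (ZMod 2) :=
  Matrix.fromBlocks (Lnk n k) (Uk n k) (Uk n k) (Lnk n k)
-- ===== auxiliary lemmas =====

lemma matAddSelf {m l : Type*} (X : Matrix m l (ZMod 2)) : X + X = 0 := by
  ext i j
  exact CharTwo.add_self_eq_zero _

lemma matNeg {m l : Type*} (X : Matrix m l (ZMod 2)) : -X = X := by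
  ext i j
  exact CharTwo.neg_eq _

section ULlemmas

variable (n k : ℕ)

lemma Uk_add_Lnk : Uk n k + Lnk n k = 1 := by
  rw [Uk, Lnk, Matrix.diagonal_add, ← Matrix.diagonal_one]
  ext i j
  simp only [Matrix.add_apply, Matrix.zero_apply, Matrix.one_apply, Matrix.diagonal_apply]
  split_ifs <;> simp_all

lemma Uk_mul_Uk : Uk n k * Uk n k = Uk n k := by
  rw [Uk, Matrix.diagonal_mul_diagonal]
  ext i j
  simp only [Matrix.add_apply, Matrix.zero_apply, Matrix.one_apply, Matrix.diagonal_apply]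
  split_ifs <;> simp_all

lemma Lnk_mul_Lnk : Lnk n k * Lnk n k = Lnk n k := by
  rw [Lnk, Matrix.diagonal_mul_diagonal]
  ext i j
  simp only [Matrix.add_apply, Matrix.zero_apply, Matrix.one_apply, Matrix.diagonal_apply]
  split_ifs <;> simp_all

lemma Uk_mul_Lnk : Uk n k * Lnk n k = 0 := by
  rw [Uk, Lnk, Matrix.diagonal_mul_diagonal, ← Matrix.diagonal_zero]
  ext i j
  simp only [Matrix.add_apply, Matrix.zero_apply, Matrix.one_apply, Matrix.diagonal_apply]
  split_ifs <;> simp_all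

lemma Lnk_mul_Uk : Lnk n k * Uk n k = 0 := by
  rw [Uk, Lnk, Matrix.diagonal_mul_diagonal, ← Matrix.diagonal_zero]
  ext i j
  simp only [Matrix.add_apply, Matrix.zero_apply, Matrix.one_apply, Matrix.diagonal_apply]
  split_ifs <;> simp_all

lemma Uk_transpose : (Uk n k)ᵀ = Uk n k := Matrix.diagonal_transpose _

lemma Lnk_transpose : (Lnk n k)ᵀ = Lnk n k := Matrix.diagonal_transpose _

end ULlemmas

section Symp

variable {n : ℕ}

lemma OmegaMat_transpose : (OmegaMat n)ᵀ = OmegaMat n := by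
  rw [OmegaMat, Matrix.fromBlocks_transpose]
  simp

lemma OmegaMat_mul_self : OmegaMat n * OmegaMat n = 1 := by
  rw [OmegaMat, Matrix.fromBlocks_multiply]
  simp [Matrix.fromBlocks_one]

lemma OmegaMat_symp : OmegaMat n * OmegaMat n * (OmegaMat n)ᵀ = OmegaMat n := by
  rw [OmegaMat_mul_self, OmegaMat_transpose, Matrix.one_mul]

lemma symp_mul {P Q : Matrix (Fin n ⊕ Fin n) (Fin n ⊕ Fin n) (ZMod 2)}
    (hP : P * OmegaMat n * Pᵀ = OmegaMat n) (hQ : Q * OmegaMat n * Qᵀ = OmegaMat n) :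
    (P * Q) * OmegaMat n * (P * Q)ᵀ = OmegaMat n := by
  rw [Matrix.transpose_mul]
  calc (P * Q) * OmegaMat n * (Qᵀ * Pᵀ) = P * (Q * OmegaMat n * Qᵀ) * Pᵀ := by
        simp only [Matrix.mul_assoc]
  _ = OmegaMat n := by rw [hQ, hP]

lemma LQ_symp {Q : Matrix (Fin n) (Fin n) (ZMod 2)} (hQ : IsUnit Q) :
    LQ Q * OmegaMat n * (LQ Q)ᵀ = OmegaMat n := by
  have hQd : IsUnit Q.det := (Matrix.isUnit_iff_isUnit_det _).mp hQ
  rw [LQ, OmegaMat, Matrix.fromBlocks_transpose, Matrix.fromBlocks_multiply,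
    Matrix.fromBlocks_multiply]
  simp only [Matrix.mul_zero, Matrix.zero_mul, Matrix.mul_one, Matrix.one_mul,
    add_zero, zero_add, Matrix.transpose_zero, Matrix.transpose_transpose]
  rw [Matrix.mul_nonsing_inv _ hQd, ← Matrix.transpose_mul, Matrix.mul_nonsing_inv _ hQd]
  simp

lemma TR_symp {R : Matrix (Fin n) (Fin n) (ZMod 2)} (hR : R.IsSymm) :
    TR R * OmegaMat n * (TR R)ᵀ = OmegaMat n := by
  rw [TR, OmegaMat, Matrix.fromBlocks_transpose, Matrix.fromBlocks_multiply,
    Matrix.fromBlocks_multiply]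
  simp only [Matrix.mul_zero, Matrix.zero_mul, Matrix.mul_one, Matrix.one_mul,
    add_zero, zero_add, Matrix.transpose_zero, Matrix.transpose_one]
  rw [hR.eq, matAddSelf]

lemma Gk_symp (n k : ℕ) : Gk n k * OmegaMat n * (Gk n k)ᵀ = OmegaMat n := by
  rw [Gk, OmegaMat, Matrix.fromBlocks_transpose, Matrix.fromBlocks_multiply,
    Matrix.fromBlocks_multiply]
  simp only [Matrix.mul_zero, Matrix.zero_mul, Matrix.mul_one, Matrix.one_mul,
    add_zero, zero_add, Uk_transpose, Lnk_transpose, Uk_mul_Uk, Lnk_mul_Lnk,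
    Uk_mul_Lnk, Lnk_mul_Uk]
  rw [Uk_add_Lnk, add_comm (Lnk n k), Uk_add_Lnk]

lemma symp_isUnit {P : Matrix (Fin n ⊕ Fin n) (Fin n ⊕ Fin n) (ZMod 2)}
    (hP : P * OmegaMat n * Pᵀ = OmegaMat n) : IsUnit P := by
  have h : P * (OmegaMat n * Pᵀ * OmegaMat n) = 1 := by
    calc P * (OmegaMat n * Pᵀ * OmegaMat n) = (P * OmegaMat n * Pᵀ) * OmegaMat n := by
          simp only [Matrix.mul_assoc]
    _ = 1 := by rw [hP, OmegaMat_mul_self]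
  exact IsUnit.of_mul_eq_one _ h

end Symp
set_option maxHeartbeats 1000000 in
open Module in
lemma exists_rank_normal_form (n : ℕ) (A : Matrix (Fin n) (Fin n) (ZMod 2)) :
    ∃ k, k ≤ n ∧ ∃ Q₁ Q₂ : Matrix (Fin n) (Fin n) (ZMod 2),
      IsUnit Q₁ ∧ IsUnit Q₂ ∧ A = Q₁ * Uk n k * Q₂ := by
  classical
  let f : (Fin n → ZMod 2) →ₗ[ZMod 2] (Fin n → ZMod 2) := A.mulVecLin
  set k := finrank (ZMod 2) (LinearMap.range f) with hkdef
  have hk : k ≤ n := by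
    simpa using Submodule.finrank_le (LinearMap.range f)
  have hrn : finrank (ZMod 2) (LinearMap.range f) + finrank (ZMod 2) (LinearMap.ker f) = n := by
    simpa using LinearMap.finrank_range_add_finrank_ker f
  obtain ⟨K', hK'⟩ := Submodule.exists_isCompl (LinearMap.ker f)
  obtain ⟨R', hR'⟩ := Submodule.exists_isCompl (LinearMap.range f)
  have hfk : finrank (ZMod 2) (LinearMap.ker f) = n - k := by omega
  have hfK' : finrank (ZMod 2) K' = k := by
    have := Submodule.finrank_add_eq_of_isCompl hK'
    simp only [finrank_fintype_fun_eq_card, Fintype.card_fin] at this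
    omega
  have hfR' : finrank (ZMod 2) R' = n - k := by
    have := Submodule.finrank_add_eq_of_isCompl hR'
    simp only [finrank_fintype_fun_eq_card, Fintype.card_fin] at this
    omega
  let bK' : Basis (Fin k) (ZMod 2) K' := finBasisOfFinrankEq _ _ hfK'
  let bK : Basis (Fin (n - k)) (ZMod 2) (LinearMap.ker f) := finBasisOfFinrankEq _ _ hfk
  let bR' : Basis (Fin (n - k)) (ZMod 2) R' := finBasisOfFinrankEq _ _ hfR'
  -- the map K' → range f
  let φ : K' →ₗ[ZMod 2] LinearMap.range f := f.rangeRestrict.comp K'.subtype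
  have hφinj : Function.Injective φ := by
    intro x y hxy
    have h1 : f x.1 = f y.1 := by
      have := congrArg (Subtype.val) hxy
      simpa [φ] using this
    have : (x.1 - y.1) ∈ LinearMap.ker f ⊓ K' := by
      refine ⟨?_, K'.sub_mem x.2 y.2⟩
      simp [LinearMap.mem_ker, map_sub, h1]
    rw [hK'.inf_eq_bot] at this
    ext1
    simpa [sub_eq_zero] using this
  let e : K' ≃ₗ[ZMod 2] LinearMap.range f :=
    φ.linearEquivOfInjective hφinj (by rw [hfK'])
  let bR : Basis (Fin k) (ZMod 2) (LinearMap.range f) := bK'.map e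
  let bV : Basis (Fin k ⊕ Fin (n - k)) (ZMod 2) (Fin n → ZMod 2) :=
    (bK'.prod bK).map (Submodule.prodEquivOfIsCompl _ _ hK'.symm)
  let bW : Basis (Fin k ⊕ Fin (n - k)) (ZMod 2) (Fin n → ZMod 2) :=
    (bR.prod bR').map (Submodule.prodEquivOfIsCompl _ _ hR')
  have hbV_inl : ∀ i, bV (Sum.inl i) = (bK' i : Fin n → ZMod 2) := by
    intro i
    simp [bV, Submodule.coe_prodEquivOfIsCompl]
  have hbV_inr : ∀ i, bV (Sum.inr i) = (bK i : Fin n → ZMod 2) := by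
    intro i
    simp [bV, Submodule.coe_prodEquivOfIsCompl]
  have hbW_inl : ∀ i, bW (Sum.inl i) = (bR i : Fin n → ZMod 2) := by
    intro i
    simp [bW, Submodule.coe_prodEquivOfIsCompl]
  have hkey : ∀ i, f (bV i) = Sum.elim (fun i => bW (Sum.inl i)) (fun _ => 0) i := by
    rintro (i | i)
    · simp only [Sum.elim_inl]
      rw [hbV_inl, hbW_inl]
      simp [bR, e, φ]
    · rw [hbV_inr]
      simpa using (bK i).2
  -- reindex
  let ee : (Fin k ⊕ Fin (n - k)) ≃ Fin n :=
    finSumFinEquiv.trans (finCongr (Nat.add_sub_cancel' hk))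
  have hee_lt : ∀ j : Fin n, (j : ℕ) < k → ∃ i : Fin k, ee.symm j = Sum.inl i := by
    intro j hj
    rcases h : ee.symm j with i | i
    · exact ⟨i, rfl⟩
    · exfalso
      have : j = ee (Sum.inr i) := by rw [← h]; simp
      have : (j : ℕ) = k + i := by
        rw [this]; simp [ee, finSumFinEquiv]
      omega
  have hee_ge : ∀ j : Fin n, ¬ (j : ℕ) < k → ∃ i : Fin (n - k), ee.symm j = Sum.inr i := by
    intro j hj
    rcases h : ee.symm j with i | i
    · exfalso
      have : j = ee (Sum.inl i) := by rw [← h]; simp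
      have : (j : ℕ) = (i : ℕ) := by
        rw [this]; simp [ee, finSumFinEquiv]
      omega
    · exact ⟨i, rfl⟩
  let bV' : Basis (Fin n) (ZMod 2) (Fin n → ZMod 2) := bV.reindex ee
  let bW' : Basis (Fin n) (ZMod 2) (Fin n → ZMod 2) := bW.reindex ee
  let Pv : Matrix (Fin n) (Fin n) (ZMod 2) := (Pi.basisFun (ZMod 2) (Fin n)).toMatrix bV'
  let Pw : Matrix (Fin n) (Fin n) (ZMod 2) := (Pi.basisFun (ZMod 2) (Fin n)).toMatrix bW'
  have hPv : IsUnit Pv := by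
    have := (Pi.basisFun (ZMod 2) (Fin n)).invertibleToMatrix bV'
    exact isUnit_of_invertible _
  have hPw : IsUnit Pw := by
    have := (Pi.basisFun (ZMod 2) (Fin n)).invertibleToMatrix bW'
    exact isUnit_of_invertible _
  have hPventry : ∀ i j, Pv i j = bV' j i := by
    intro i j; simp [Pv, Basis.toMatrix_apply]
  have hPwentry : ∀ i j, Pw i j = bW' j i := by
    intro i j; simp [Pw, Basis.toMatrix_apply]
  have hmain : A * Pv = Pw * Uk n k := by
    ext i j
    have hL : (A * Pv) i j = f (bV' j) i := by
      simp only [Matrix.mul_apply, hPventry]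
      rfl
    have hR : (Pw * Uk n k) i j = (if (j : ℕ) < k then bW' j i else 0) := by
      rw [Uk, Matrix.mul_diagonal, hPwentry]
      split <;> simp
    rw [hL, hR]
    have hbV'j : bV' j = bV (ee.symm j) := by simp [bV']
    have hbW'j : bW' j = bW (ee.symm j) := by simp [bW']
    by_cases hj : (j : ℕ) < k
    · obtain ⟨i', hi'⟩ := hee_lt j hj
      rw [hbV'j, hi', hkey, if_pos hj, hbW'j, hi']
      simp
    · obtain ⟨i', hi'⟩ := hee_ge j hj
      rw [hbV'j, hi', hkey, if_neg hj]
      simp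
  refine ⟨k, hk, Pw, Pv⁻¹, hPw, ((Matrix.isUnit_iff_isUnit_det _).mpr (Matrix.isUnit_nonsing_inv_det _ ((Matrix.isUnit_iff_isUnit_det _).mp hPv))), ?_⟩
  calc A = A * Pv * Pv⁻¹ := by rw [Matrix.mul_nonsing_inv_cancel_right _ _ ((Matrix.isUnit_iff_isUnit_det _).mp hPv)]
  _ = Pw * Uk n k * Pv⁻¹ := by rw [hmain]
section MainProof

variable {n : ℕ}

/-- cancel an invertible matrix on both sides -/
lemma cancel_conj {Q X Y : Matrix (Fin n) (Fin n) (ZMod 2)} (hQ : IsUnit Qᵀ.det)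
    (hQ' : IsUnit Q.det) (h : Qᵀ * X * Q = Qᵀ * Y * Q) : X = Y := by
  have h2 := congrArg (fun Z => (Qᵀ)⁻¹ * Z * Q⁻¹) h
  simp only [Matrix.mul_assoc] at h2
  rw [Matrix.nonsing_inv_mul_cancel_left _ _ hQ,
    Matrix.nonsing_inv_mul_cancel_left _ _ hQ] at h2
  rw [Matrix.mul_nonsing_inv _ hQ', Matrix.mul_one, Matrix.mul_one] at h2
  exact h2

set_option maxHeartbeats 4000000 in
theorem symplectic_decomposition (n : ℕ)
    (F : Matrix (Fin n ⊕ Fin n) (Fin n ⊕ Fin n) (ZMod 2))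
    (hF : F * OmegaMat n * Fᵀ = OmegaMat n) :
    ∃ (k : ℕ) (Q₁ Q₂ R₁ R₂ : Matrix (Fin n) (Fin n) (ZMod 2)),
      k ≤ n ∧ IsUnit Q₁ ∧ IsUnit Q₂ ∧ R₁.IsSymm ∧ R₂.IsSymm ∧
      F = LQ Q₁ * OmegaMat n * TR R₁ * Gk n k * TR R₂ * LQ Q₂ := by
  classical
  have hΩΩ : OmegaMat n * OmegaMat n = 1 := OmegaMat_mul_self
  have hFinv : F * (OmegaMat n * Fᵀ * OmegaMat n) = 1 := by
    calc F * (OmegaMat n * Fᵀ * OmegaMat n) = (F * OmegaMat n * Fᵀ) * OmegaMat n := by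
          simp only [Matrix.mul_assoc]
    _ = 1 := by rw [hF, hΩΩ]
  have hFinv' : (OmegaMat n * Fᵀ * OmegaMat n) * F = 1 := mul_eq_one_comm.mp hFinv
  have hFt : Fᵀ * OmegaMat n * F = OmegaMat n := by
    have h2 : OmegaMat n * (Fᵀ * OmegaMat n * F) = 1 := by
      rw [← hFinv']; simp only [Matrix.mul_assoc]
    calc Fᵀ * OmegaMat n * F
        = OmegaMat n * (OmegaMat n * (Fᵀ * OmegaMat n * F)) := by
          rw [← Matrix.mul_assoc, hΩΩ, Matrix.one_mul]
    _ = OmegaMat n := by rw [h2, Matrix.mul_one]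
  obtain ⟨A, B, C, D, hFb⟩ : ∃ A B C D, F = Matrix.fromBlocks A B C D :=
    ⟨_, _, _, _, (Matrix.fromBlocks_toBlocks F).symm⟩
  have h1 : Cᵀ * A + Aᵀ * C = 0 := by
    have h3 : (Matrix.fromBlocks A B C D)ᵀ * OmegaMat n * (Matrix.fromBlocks A B C D)
        = OmegaMat n := by rw [← hFb]; exact hFt
    rw [OmegaMat, Matrix.fromBlocks_transpose, Matrix.fromBlocks_multiply,
      Matrix.fromBlocks_multiply] at h3
    have := congrArg Matrix.toBlocks₁₁ h3
    simpa using this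
  have hsym : Cᵀ * A = Aᵀ * C := by
    have h4 : Cᵀ * A = Cᵀ * A + (Aᵀ * C + Aᵀ * C) := by rw [matAddSelf, add_zero]
    rw [← add_assoc, h1, zero_add] at h4
    exact h4
  obtain ⟨k, hk, Q1, Q2₀, hQ1, hQ2₀, hA0⟩ := exists_rank_normal_form n A
  have hQ1d : IsUnit Q1.det := (Matrix.isUnit_iff_isUnit_det _).mp hQ1
  have hQ2₀d : IsUnit Q2₀.det := (Matrix.isUnit_iff_isUnit_det _).mp hQ2₀
  have hQ1td : IsUnit Q1ᵀ.det := by rw [Matrix.det_transpose]; exact hQ1d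
  have hQ2₀td : IsUnit Q2₀ᵀ.det := by rw [Matrix.det_transpose]; exact hQ2₀d
  have hUU : Uk n k * Uk n k = Uk n k := Uk_mul_Uk n k
  have hLL : Lnk n k * Lnk n k = Lnk n k := Lnk_mul_Lnk n k
  have hUL : Uk n k * Lnk n k = 0 := Uk_mul_Lnk n k
  have hLU : Lnk n k * Uk n k = 0 := Lnk_mul_Uk n k
  have hUL1 : Uk n k + Lnk n k = 1 := Uk_add_Lnk n k
  have hLU1 : Lnk n k + Uk n k = 1 := by rw [add_comm]; exact hUL1
  have hUt : (Uk n k)ᵀ = Uk n k := Uk_transpose n k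
  have hLt : (Lnk n k)ᵀ = Lnk n k := Lnk_transpose n k
  obtain ⟨M₀, hM₀def⟩ : ∃ X, X = Q1ᵀ * C * Q2₀⁻¹ := ⟨_, rfl⟩
  have hQ1tC : Q1ᵀ * C = M₀ * Q2₀ := by
    rw [hM₀def, Matrix.nonsing_inv_mul_cancel_right _ _ hQ2₀d]
  have hCform : C = (Q1ᵀ)⁻¹ * (M₀ * Q2₀) := by
    rw [← hQ1tC, Matrix.nonsing_inv_mul_cancel_left _ _ hQ1td]
  have hCtQ1 : Cᵀ * Q1 = Q2₀ᵀ * M₀ᵀ := by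
    have h5 := congrArg Matrix.transpose hQ1tC
    rw [Matrix.transpose_mul, Matrix.transpose_mul, Matrix.transpose_transpose] at h5
    exact h5
  have hUM₀ : Uk n k * M₀ = M₀ᵀ * Uk n k := by
    apply cancel_conj hQ2₀td hQ2₀d
    have e1 : Q2₀ᵀ * (Uk n k * M₀) * Q2₀ = Aᵀ * C := by
      calc Q2₀ᵀ * (Uk n k * M₀) * Q2₀
          = Q2₀ᵀ * ((Uk n k)ᵀ * (Q1ᵀ * C)) := by
            rw [hUt, hQ1tC]; simp only [Matrix.mul_assoc]
      _ = (Q1 * Uk n k * Q2₀)ᵀ * C := by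
            simp only [Matrix.transpose_mul, Matrix.mul_assoc]
      _ = Aᵀ * C := by rw [← hA0]
    have e2 : Q2₀ᵀ * (M₀ᵀ * Uk n k) * Q2₀ = Cᵀ * A := by
      calc Q2₀ᵀ * (M₀ᵀ * Uk n k) * Q2₀
          = (Q2₀ᵀ * M₀ᵀ) * (Uk n k * Q2₀) := by simp only [Matrix.mul_assoc]
      _ = (Cᵀ * Q1) * (Uk n k * Q2₀) := by rw [hCtQ1]
      _ = Cᵀ * (Q1 * Uk n k * Q2₀) := by simp only [Matrix.mul_assoc]
      _ = Cᵀ * A := by rw [← hA0]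
    rw [e1, e2]
    exact hsym.symm
  have hUM₀L : Uk n k * M₀ * Lnk n k = 0 := by
    rw [hUM₀, Matrix.mul_assoc, hUL, Matrix.mul_zero]
  have hM₀L : M₀ * Lnk n k = Lnk n k * M₀ * Lnk n k := by
    calc M₀ * Lnk n k = (Uk n k + Lnk n k) * (M₀ * Lnk n k) := by rw [hUL1, Matrix.one_mul]
    _ = Uk n k * M₀ * Lnk n k + Lnk n k * M₀ * Lnk n k := by
        rw [Matrix.add_mul]; simp only [Matrix.mul_assoc]
    _ = Lnk n k * M₀ * Lnk n k := by rw [hUM₀L, zero_add]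
  obtain ⟨T, hTdef⟩ : ∃ X, X = Uk n k + Lnk n k * M₀ * Lnk n k := ⟨_, rfl⟩
  have hUT : Uk n k * T = Uk n k := by
    rw [hTdef, Matrix.mul_add, hUU]
    rw [show Uk n k * (Lnk n k * M₀ * Lnk n k)
        = (Uk n k * Lnk n k) * (M₀ * Lnk n k) by simp only [Matrix.mul_assoc]]
    rw [hUL, Matrix.zero_mul, add_zero]
  -- invertibility of T
  have hTkey : ∀ z : Fin n → ZMod 2, T *ᵥ z = 0 → z = 0 := by
    intro z hz
    have hUz : Uk n k *ᵥ z = 0 := by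
      calc Uk n k *ᵥ z = (Uk n k * T) *ᵥ z := by rw [hUT]
      _ = Uk n k *ᵥ (T *ᵥ z) := by rw [Matrix.mulVec_mulVec]
      _ = 0 := by rw [hz, Matrix.mulVec_zero]
    have hLMLz : (Lnk n k * M₀ * Lnk n k) *ᵥ z = 0 := by
      have h6 : T *ᵥ z = Uk n k *ᵥ z + (Lnk n k * M₀ * Lnk n k) *ᵥ z := by
        rw [hTdef, Matrix.add_mulVec]
      rw [hz, hUz, zero_add] at h6
      exact h6.symm
    have hMx : M₀ *ᵥ (Lnk n k *ᵥ z) = 0 := by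
      rw [Matrix.mulVec_mulVec, hM₀L, hLMLz]
    have hUx : Uk n k *ᵥ (Lnk n k *ᵥ z) = 0 := by
      rw [Matrix.mulVec_mulVec, hUL, Matrix.zero_mulVec]
    set w := Q2₀⁻¹ *ᵥ (Lnk n k *ᵥ z) with hwdef
    have hAw : A *ᵥ w = 0 := by
      rw [hwdef, hA0, Matrix.mulVec_mulVec, Matrix.mul_nonsing_inv_cancel_right _ _ hQ2₀d,
        ← Matrix.mulVec_mulVec, hUx, Matrix.mulVec_zero]
    have hCw : C *ᵥ w = 0 := by
      rw [hwdef, hCform, Matrix.mulVec_mulVec]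
      rw [show (Q1ᵀ)⁻¹ * (M₀ * Q2₀) * Q2₀⁻¹ = (Q1ᵀ)⁻¹ * (M₀ * (Q2₀ * Q2₀⁻¹)) by
        simp only [Matrix.mul_assoc]]
      rw [Matrix.mul_nonsing_inv _ hQ2₀d, Matrix.mul_one, ← Matrix.mulVec_mulVec, hMx,
        Matrix.mulVec_zero]
    have hFv : F *ᵥ (Sum.elim w 0) = 0 := by
      rw [hFb, Matrix.fromBlocks_mulVec]
      funext i
      rcases i with i | i <;> simp [hAw, hCw, Matrix.mulVec_zero]
    have hv0 : (Sum.elim w (0 : Fin n → ZMod 2)) = 0 := by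
      have h7 := congrArg (fun v => (OmegaMat n * Fᵀ * OmegaMat n) *ᵥ v) hFv
      simpa [Matrix.mulVec_mulVec, hFinv', Matrix.one_mulVec, Matrix.mulVec_zero] using h7
    have hw0 : w = 0 := funext fun i => congrFun hv0 (Sum.inl i)
    have hx0 : Lnk n k *ᵥ z = 0 := by
      have h8 : Lnk n k *ᵥ z = Q2₀ *ᵥ w := by
        rw [hwdef, Matrix.mulVec_mulVec, Matrix.mul_nonsing_inv _ hQ2₀d, Matrix.one_mulVec]
      rw [h8, hw0, Matrix.mulVec_zero]
    have h9 : z = (Uk n k + Lnk n k) *ᵥ z := by rw [hUL1, Matrix.one_mulVec]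
    rw [h9, Matrix.add_mulVec, hUz, hx0, add_zero]
  have hTunit : IsUnit T := by
    apply Matrix.mulVec_injective_iff_isUnit.mp
    intro a b hab
    have h0 : T *ᵥ (a - b) = 0 := by rw [Matrix.mulVec_sub, hab, sub_self]
    exact sub_eq_zero.mp (hTkey _ h0)
  have hTd : IsUnit T.det := (Matrix.isUnit_iff_isUnit_det _).mp hTunit
  have hTtd : IsUnit Tᵀ.det := by rw [Matrix.det_transpose]; exact hTd
  obtain ⟨Q2, hQ2def⟩ : ∃ X, X = T * Q2₀ := ⟨_, rfl⟩
  have hQ2 : IsUnit Q2 := by rw [hQ2def]; exact hTunit.mul hQ2₀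
  have hQ2d : IsUnit Q2.det := (Matrix.isUnit_iff_isUnit_det _).mp hQ2
  have hQ2td : IsUnit Q2ᵀ.det := by rw [Matrix.det_transpose]; exact hQ2d
  have hAQ : A = Q1 * Uk n k * Q2 := by
    rw [hQ2def, hA0]
    calc Q1 * Uk n k * Q2₀ = Q1 * (Uk n k * T) * Q2₀ := by rw [hUT]
    _ = Q1 * Uk n k * (T * Q2₀) := by simp only [Matrix.mul_assoc]
  have hQ2inv : Q2⁻¹ = Q2₀⁻¹ * T⁻¹ := by rw [hQ2def, Matrix.mul_inv_rev]
  obtain ⟨M, hMdef⟩ : ∃ X, X = Q1ᵀ * C * Q2⁻¹ := ⟨_, rfl⟩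
  have hMM₀ : M = M₀ * T⁻¹ := by
    rw [hMdef, hQ2inv, hM₀def]
    simp only [Matrix.mul_assoc]
  have hUTi : Uk n k * T⁻¹ = Uk n k := by
    calc Uk n k * T⁻¹ = (Uk n k * T) * T⁻¹ := by rw [hUT]
    _ = Uk n k := by rw [Matrix.mul_nonsing_inv_cancel_right _ _ hTd]
  have hUM₀U : Uk n k * M₀ * Uk n k = Uk n k * M₀ := by
    conv_rhs => rw [← Matrix.mul_one (Uk n k * M₀), ← hUL1]
    rw [Matrix.mul_add, hUM₀L, add_zero]
  have hUM₀T : Uk n k * M₀ * T = Uk n k * M₀ := by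
    rw [hTdef, Matrix.mul_add, hUM₀U]
    rw [show Uk n k * M₀ * (Lnk n k * M₀ * Lnk n k)
        = (Uk n k * M₀ * Lnk n k) * (M₀ * Lnk n k) by simp only [Matrix.mul_assoc]]
    rw [hUM₀L, Matrix.zero_mul, add_zero]
  have hUM : Uk n k * M = Mᵀ * Uk n k := by
    have lhs : Uk n k * M = Uk n k * M₀ := by
      calc Uk n k * M = Uk n k * M₀ * T⁻¹ := by rw [hMM₀, ← Matrix.mul_assoc]
      _ = (Uk n k * M₀ * T) * T⁻¹ := by rw [hUM₀T]
      _ = Uk n k * M₀ := by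
          rw [Matrix.mul_assoc, Matrix.mul_nonsing_inv _ hTd, Matrix.mul_one]
    have hTtUM₀ : Tᵀ * (Uk n k * M₀) = Uk n k * M₀ := by
      have ht : Tᵀ = Uk n k + Lnk n k * (M₀ᵀ * Lnk n k) := by
        rw [hTdef, Matrix.transpose_add, Matrix.transpose_mul, Matrix.transpose_mul, hLt, hUt]
      rw [ht, Matrix.add_mul]
      rw [show Uk n k * (Uk n k * M₀) = (Uk n k * Uk n k) * M₀ from
        (Matrix.mul_assoc _ _ _).symm]
      rw [hUU]
      rw [show Lnk n k * (M₀ᵀ * Lnk n k) * (Uk n k * M₀)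
          = Lnk n k * (M₀ᵀ * ((Lnk n k * Uk n k) * M₀)) by simp only [Matrix.mul_assoc]]
      rw [hLU, Matrix.zero_mul, Matrix.mul_zero, Matrix.mul_zero, add_zero]
    have rhs : Mᵀ * Uk n k = Uk n k * M₀ := by
      calc Mᵀ * Uk n k = Tᵀ⁻¹ * (M₀ᵀ * Uk n k) := by
            rw [hMM₀, Matrix.transpose_mul, Matrix.transpose_nonsing_inv, Matrix.mul_assoc]
      _ = Tᵀ⁻¹ * (Uk n k * M₀) := by rw [← hUM₀]
      _ = Uk n k * M₀ := by
          conv_lhs => rw [← hTtUM₀]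
          rw [Matrix.nonsing_inv_mul_cancel_left _ _ hTtd]
    rw [lhs, rhs]
  have hML : M * Lnk n k = Lnk n k := by
    have hUS : Uk n k * (T⁻¹ * Lnk n k) = 0 := by
      rw [← Matrix.mul_assoc, hUTi, hUL]
    have hLS : T⁻¹ * Lnk n k = Lnk n k * (T⁻¹ * Lnk n k) := by
      conv_lhs => rw [← Matrix.one_mul (T⁻¹ * Lnk n k), ← hUL1]
      rw [Matrix.add_mul, hUS, zero_add]
    have hLML : Lnk n k * M₀ * Lnk n k = T + Uk n k := by
      have h10 : Lnk n k * M₀ * Lnk n k = T - Uk n k := by rw [hTdef]; abel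
      rw [h10, sub_eq_add_neg, matNeg]
    have hM₀S : M₀ * (T⁻¹ * Lnk n k) = Lnk n k := by
      calc M₀ * (T⁻¹ * Lnk n k) = M₀ * (Lnk n k * (T⁻¹ * Lnk n k)) := by rw [← hLS]
      _ = (M₀ * Lnk n k) * (T⁻¹ * Lnk n k) := by simp only [Matrix.mul_assoc]
      _ = (Lnk n k * M₀ * Lnk n k) * (T⁻¹ * Lnk n k) := by rw [← hM₀L]
      _ = (T + Uk n k) * (T⁻¹ * Lnk n k) := by rw [hLML]
      _ = T * (T⁻¹ * Lnk n k) + Uk n k * (T⁻¹ * Lnk n k) := by rw [Matrix.add_mul]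
      _ = Lnk n k := by
          rw [hUS, add_zero, Matrix.mul_nonsing_inv_cancel_left _ _ hTd]
    calc M * Lnk n k = M₀ * (T⁻¹ * Lnk n k) := by rw [hMM₀, Matrix.mul_assoc]
    _ = Lnk n k := hM₀S
  have hUML : Uk n k * M * Lnk n k = 0 := by
    rw [hUM, Matrix.mul_assoc, hUL, Matrix.mul_zero]
  have hUMU : Uk n k * M * Uk n k = Uk n k * M := by
    conv_rhs => rw [← Matrix.mul_one (Uk n k * M), ← hUL1]
    rw [Matrix.mul_add, hUML, add_zero]
  have hUMtU : Uk n k * Mᵀ * Uk n k = Uk n k * M := by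
    calc Uk n k * Mᵀ * Uk n k = (Uk n k * M * Uk n k)ᵀ := by
          simp only [Matrix.transpose_mul, hUt, Matrix.transpose_transpose, Matrix.mul_assoc]
    _ = (Uk n k * M)ᵀ := by rw [hUMU]
    _ = Mᵀ * Uk n k := by rw [Matrix.transpose_mul, hUt]
    _ = Uk n k * M := by rw [← hUM]
  obtain ⟨R1, hR1def⟩ : ∃ X, X = Uk n k * M * Uk n k + Lnk n k * M * Uk n k + Uk n k * Mᵀ * Lnk n k := ⟨_, rfl⟩
  have hR1symm : R1.IsSymm := by
    rw [Matrix.IsSymm, hR1def]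
    rw [Matrix.transpose_add, Matrix.transpose_add]
    simp only [Matrix.transpose_mul, hUt, hLt, Matrix.transpose_transpose]
    -- goal : Uk*(Mᵀ*Uk) + Uk*(Mᵀ*Lnk) + Lnk*(M*Uk) = ...
    simp only [← Matrix.mul_assoc]
    rw [hUMtU, hUMU]
    abel
  have hR1U : Lnk n k + R1 * Uk n k = M := by
    have h12 : R1 * Uk n k = M * Uk n k := by
      rw [hR1def, Matrix.add_mul, Matrix.add_mul]
      rw [show Uk n k * M * Uk n k * Uk n k = Uk n k * M * (Uk n k * Uk n k) by
        simp only [Matrix.mul_assoc]]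
      rw [show Lnk n k * M * Uk n k * Uk n k = Lnk n k * M * (Uk n k * Uk n k) by
        simp only [Matrix.mul_assoc]]
      rw [show Uk n k * Mᵀ * Lnk n k * Uk n k = Uk n k * Mᵀ * (Lnk n k * Uk n k) by
        simp only [Matrix.mul_assoc]]
      rw [hUU, hLU, Matrix.mul_zero, add_zero, hUMU]
      rw [show Uk n k * M + Lnk n k * M * Uk n k = Uk n k * (M * Uk n k)
          + Lnk n k * (M * Uk n k) from ?_]
      · rw [← Matrix.add_mul, hUL1, Matrix.one_mul]
      · rw [← Matrix.mul_assoc, ← Matrix.mul_assoc, hUMU]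
    rw [h12, ← hML]
    rw [← Matrix.mul_add, hLU1, Matrix.mul_one]
  have hCQ : C = (Q1⁻¹)ᵀ * (Lnk n k + R1 * Uk n k) * Q2 := by
    rw [hR1U, Matrix.transpose_nonsing_inv]
    rw [hMdef]
    calc C = (Q1ᵀ)⁻¹ * (Q1ᵀ * C) := by
          rw [Matrix.nonsing_inv_mul_cancel_left _ _ hQ1td]
    _ = (Q1ᵀ)⁻¹ * (Q1ᵀ * C * Q2⁻¹ * Q2) := by
          rw [Matrix.nonsing_inv_mul_cancel_right _ _ hQ2d]
    _ = (Q1ᵀ)⁻¹ * (Q1ᵀ * C * Q2⁻¹) * Q2 := by simp only [Matrix.mul_assoc]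
  -- the matrix P0
  obtain ⟨J, hJdef⟩ : ∃ X : Matrix (Fin n ⊕ Fin n) (Fin n ⊕ Fin n) (ZMod 2),
    X = Matrix.fromBlocks 1 0 0 0 := ⟨_, rfl⟩
  obtain ⟨P0, hP0def⟩ : ∃ X, X = LQ Q1 * OmegaMat n * TR R1 * Gk n k * LQ Q2 := ⟨_, rfl⟩
  have hstep1 : LQ Q1 * OmegaMat n = Matrix.fromBlocks 0 Q1 ((Q1⁻¹)ᵀ) 0 := by
    rw [LQ, OmegaMat, Matrix.fromBlocks_multiply]
    simp
  have hstep2 : LQ Q1 * OmegaMat n * TR R1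
      = Matrix.fromBlocks 0 Q1 ((Q1⁻¹)ᵀ) ((Q1⁻¹)ᵀ * R1) := by
    rw [hstep1, TR, Matrix.fromBlocks_multiply]
    simp
  have hstep3 : LQ Q1 * OmegaMat n * TR R1 * Gk n k
      = Matrix.fromBlocks (Q1 * Uk n k) (Q1 * Lnk n k)
        ((Q1⁻¹)ᵀ * (Lnk n k + R1 * Uk n k)) ((Q1⁻¹)ᵀ * (Uk n k + R1 * Lnk n k)) := by
    rw [hstep2, Gk, Matrix.fromBlocks_multiply]
    simp [Matrix.mul_add, Matrix.mul_assoc]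
  have hstep4 : P0 = Matrix.fromBlocks (Q1 * Uk n k * Q2) (Q1 * Lnk n k * (Q2⁻¹)ᵀ)
      ((Q1⁻¹)ᵀ * (Lnk n k + R1 * Uk n k) * Q2)
      ((Q1⁻¹)ᵀ * (Uk n k + R1 * Lnk n k) * (Q2⁻¹)ᵀ) := by
    rw [hP0def, hstep3, LQ, Matrix.fromBlocks_multiply]
    simp
  have hP0J : P0 * J = Matrix.fromBlocks A 0 C 0 := by
    rw [hstep4, hJdef, Matrix.fromBlocks_multiply]
    simp [← hAQ, ← hCQ]
  have hFJ : F * J = Matrix.fromBlocks A 0 C 0 := by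
    rw [hFb, hJdef, Matrix.fromBlocks_multiply]
    simp
  have hP0symp : P0 * OmegaMat n * P0ᵀ = OmegaMat n := by
    rw [hP0def]
    exact symp_mul (symp_mul (symp_mul (symp_mul (LQ_symp hQ1) OmegaMat_symp)
      (TR_symp hR1symm)) (Gk_symp n k)) (LQ_symp hQ2)
  have hP0unit : IsUnit P0 := symp_isUnit hP0symp
  have hP0d : IsUnit P0.det := (Matrix.isUnit_iff_isUnit_det _).mp hP0unit
  have hP0td : IsUnit P0ᵀ.det := by rw [Matrix.det_transpose]; exact hP0d
  obtain ⟨X, hXdef⟩ : ∃ Y, Y = P0⁻¹ * F := ⟨_, rfl⟩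
  have hPX : P0 * X = F := by
    rw [hXdef, Matrix.mul_nonsing_inv_cancel_left _ _ hP0d]
  have hXJ : X * J = J := by
    calc X * J = P0⁻¹ * (F * J) := by rw [hXdef, Matrix.mul_assoc]
    _ = P0⁻¹ * (P0 * J) := by rw [hFJ, ← hP0J]
    _ = J := by rw [Matrix.nonsing_inv_mul_cancel_left _ _ hP0d]
  have hXs : X * OmegaMat n * Xᵀ = OmegaMat n := by
    have h13 : X * OmegaMat n * Xᵀ = P0⁻¹ * OmegaMat n * (P0ᵀ)⁻¹ := by
      rw [hXdef, Matrix.transpose_mul]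
      calc P0⁻¹ * F * OmegaMat n * (Fᵀ * (P0⁻¹)ᵀ)
          = P0⁻¹ * (F * OmegaMat n * Fᵀ) * (P0⁻¹)ᵀ := by simp only [Matrix.mul_assoc]
      _ = P0⁻¹ * OmegaMat n * (P0⁻¹)ᵀ := by rw [hF]
      _ = P0⁻¹ * OmegaMat n * (P0ᵀ)⁻¹ := by rw [Matrix.transpose_nonsing_inv]
    rw [h13]
    conv_lhs => rw [← hP0symp]
    calc P0⁻¹ * (P0 * OmegaMat n * P0ᵀ) * (P0ᵀ)⁻¹
        = P0⁻¹ * (P0 * (OmegaMat n * (P0ᵀ * (P0ᵀ)⁻¹))) := by simp only [Matrix.mul_assoc]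
    _ = OmegaMat n := by
        rw [Matrix.mul_nonsing_inv _ hP0td, Matrix.mul_one,
          Matrix.nonsing_inv_mul_cancel_left _ _ hP0d]
  obtain ⟨X1, X2, X3, X4, hXb⟩ : ∃ X1 X2 X3 X4, X = Matrix.fromBlocks X1 X2 X3 X4 :=
    ⟨_, _, _, _, (Matrix.fromBlocks_toBlocks X).symm⟩
  have hX1 : X1 = 1 := by
    have h14 := hXJ
    rw [hXb, hJdef, Matrix.fromBlocks_multiply] at h14
    have := congrArg Matrix.toBlocks₁₁ h14
    simpa using this
  have hX3 : X3 = 0 := by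
    have h14 := hXJ
    rw [hXb, hJdef, Matrix.fromBlocks_multiply] at h14
    have := congrArg Matrix.toBlocks₂₁ h14
    simpa using this
  have hXb2 : X = Matrix.fromBlocks 1 X2 0 X4 := by rw [hXb, hX1, hX3]
  have h15 : Matrix.fromBlocks (X2 + X2ᵀ) X4ᵀ X4 0
      = (Matrix.fromBlocks 0 1 1 0 : Matrix (Fin n ⊕ Fin n) (Fin n ⊕ Fin n) (ZMod 2)) := by
    have h16 := hXs
    rw [hXb2, OmegaMat, Matrix.fromBlocks_transpose, Matrix.fromBlocks_multiply,
      Matrix.fromBlocks_multiply] at h16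
    rw [← h16]
    congr 1 <;> simp
  have hX4 : X4 = 1 := by
    have := congrArg Matrix.toBlocks₂₁ h15
    simpa using this
  have hX2s : X2ᵀ = X2 := by
    have h17 : X2 + X2ᵀ = 0 := by
      have := congrArg Matrix.toBlocks₁₁ h15
      simpa using this
    have h18 : X2ᵀ = X2 + (X2 + X2ᵀ) := by rw [← add_assoc, matAddSelf, zero_add]
    rw [h17, add_zero] at h18
    exact h18
  have hXTR : X = TR X2 := by rw [hXb2, hX4, TR]
  obtain ⟨R2, hR2def⟩ : ∃ Y, Y = Q2 * X2 * Q2ᵀ := ⟨_, rfl⟩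
  have hR2symm : R2.IsSymm := by
    rw [Matrix.IsSymm, hR2def]
    simp only [Matrix.transpose_mul, Matrix.transpose_transpose, hX2s]
    simp only [Matrix.mul_assoc]
  have hcomm : TR R2 * LQ Q2 = LQ Q2 * TR X2 := by
    rw [TR, TR, LQ, Matrix.fromBlocks_multiply, Matrix.fromBlocks_multiply]
    simp only [Matrix.one_mul, Matrix.mul_one, Matrix.mul_zero, Matrix.zero_mul,
      add_zero, zero_add]
    congr 1
    rw [hR2def, Matrix.transpose_nonsing_inv, Matrix.mul_nonsing_inv_cancel_right _ _ hQ2td]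
  refine ⟨k, Q1, Q2, R1, R2, hk, hQ1, hQ2, hR1symm, hR2symm, ?_⟩
  calc F = P0 * X := hPX.symm
  _ = LQ Q1 * OmegaMat n * TR R1 * Gk n k * LQ Q2 * TR X2 := by rw [hP0def, hXTR]
  _ = LQ Q1 * OmegaMat n * TR R1 * Gk n k * (LQ Q2 * TR X2) := by
        simp only [Matrix.mul_assoc]
  _ = LQ Q1 * OmegaMat n * TR R1 * Gk n k * (TR R2 * LQ Q2) := by rw [hcomm]
  _ = LQ Q1 * OmegaMat n * TR R1 * Gk n k * TR R2 * LQ Q2 := by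
        simp only [Matrix.mul_assoc]

end MainProof
end
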